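/- For any PDFA A with all states reachable, every realization B of the quotient PDFA of A modulo E defines a language model pointwise E-equivalent to that of A: M_B(u) =_E M_A(u) for all u ∈ Σ*. -/
import Mathlib


/-- A probability distribution over `Option α` (the alphabet `α` extended with
the terminal symbol `$`, modeled as `none`). -/
def PDist (α : Type*) [Fintype α] : Type _ :=
  {f : Option α → ℝ // (∀ x, 0 ≤ f x) ∧ ∑ x, f x = 1}

/-- A probabilistic deterministic finite automaton with state space `Q`. -/
structure PDFA (Q : Type*) (α : Type*) [Fintype α] where
  init : Q
  out : Q → PDist α
  next : Q → α → Q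

variable {Q α : Type*} [Fintype α]

/-- Extension of the transition function to strings. -/
def PDFA.run (A : PDFA Q α) (q : Q) (u : List α) : Q := u.foldl A.next q

/-- The language model defined by a PDFA. -/
def PDFA.lm (A : PDFA Q α) (u : List α) : PDist α := A.out (A.run A.init u)

/-- The tolerance/congruence induced on strings by a language model `M` and a
relation `S` on distributions. -/
def strTol (M : List α → PDist α) (S : PDist α → PDist α → Prop) (u u' : List α) : Prop :=
  ∀ w : List α, S (M (u ++ w)) (M (u' ++ w))

/-- The tolerance/congruence induced on states of a PDFA. -/
def stateTol (A : PDFA Q α) (S : PDist α → PDist α → Prop) (q q' : Q) : Prop :=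
  ∀ w : List α, S (A.out (A.run q w)) (A.out (A.run q' w))

/-- A quotient PDFA: like a PDFA but the output map assigns an `E`-equivalence
class of distributions to each state. -/
structure QPDFA (Q : Type*) (α : Type*) [Fintype α] (E : PDist α → PDist α → Prop) where
  init : Q
  next : Q → α → Q
  out : Q → Quot E

variable {E : PDist α → PDist α → Prop}

/-- Extension of the transition function of a quotient PDFA to strings. -/
def QPDFA.run (H : QPDFA Q α E) (q : Q) (u : List α) : Q := u.foldl H.next q

/-- The class-valued output of a quotient PDFA on a string: `π̄*(u) = π̄(τ̄*(u))`. -/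
def QPDFA.outStar (H : QPDFA Q α E) (u : List α) : Quot E := H.out (H.run H.init u)

/-- A PDFA `A` realizes a quotient PDFA `H` (on the same state space) if they
share initial state and transitions, and the output distribution of `A` at each
state lies in the class assigned by `H`. -/
def Realizes (A : PDFA Q α) (H : QPDFA Q α E) : Prop :=
  A.init = H.init ∧ A.next = H.next ∧ ∀ q, Quot.mk E (A.out q) = H.out q

/-- The quotient PDFA of a PDFA `A` modulo the state congruence `≡^A_E`. -/
def PDFA.quot (A : PDFA Q α) (E : PDist α → PDist α → Prop) :
    QPDFA (Quot (stateTol A E)) α E where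
  init := Quot.mk _ A.init
  next := fun x a =>
    Quot.lift (fun q => Quot.mk (stateTol A E) (A.next q a))
      (fun _ _ h => Quot.sound (fun w => h (a :: w))) x
  out := Quot.lift (fun q => Quot.mk E (A.out q)) (fun _ _ h => Quot.sound (h []))

/-- Every realization of the quotient PDFA of `A` defines a language model
pointwise `E`-equivalent to that of `A`. -/
theorem realization_of_quotient_equiv {Q α : Type*} [Fintype α] [Fintype Q]
    (A : PDFA Q α) (E : PDist α → PDist α → Prop) (hE : Equivalence E)
    (hreach : ∀ q : Q, ∃ u : List α, A.run A.init u = q)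
    (B : PDFA (Quot (stateTol A E)) α) (hB : Realizes B (A.quot E)) :
    ∀ u : List α, E (B.lm u) (A.lm u) := by
  obtain ⟨hinit, hnext, hout⟩ := hB
  have hrun : ∀ (u : List α) (q : Q),
      B.run (Quot.mk _ q) u = Quot.mk (stateTol A E) (A.run q u) := by
    intro u
    induction u with
    | nil => intro q; rfl
    | cons a u ih =>
      intro q
      have : B.next (Quot.mk _ q) a = Quot.mk (stateTol A E) (A.next q a) := by
        rw [hnext]; rfl
      simp [PDFA.run, PDFA.lm, this] at *
      exact ih (A.next q a)
  intro u
  have h1 : B.run B.init u = Quot.mk (stateTol A E) (A.run A.init u) := by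
    rw [hinit]; exact hrun u A.init
  have h2 : Quot.mk E (B.lm u) = Quot.mk E (A.lm u) := by
    unfold PDFA.lm
    rw [h1, hout]
    rfl
  exact (hE.eqvGen_iff).1 (Quot.eqvGen_exact h2)
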